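/- Let V be a finite-dimensional complex vector space, F, G, μ invertible linear operators on V, and R = (F ⊗ G) ∘ S where S is the swap. If R commutes with μ ⊗ μ, then there exists a nonzero scalar q ∈ ℂ such that Fμ = q μF and Gμ = q⁻¹ μG. -/

import Mathlib

open TensorProduct

variable {V : Type*} [AddCommGroup V] [Module ℂ V]

/-- The swap operator `S : a ⊗ b ↦ b ⊗ a`. -/
noncomputable def swapOp : Module.End ℂ (V ⊗[ℂ] V) :=
  (TensorProduct.comm ℂ V V).toLinearMap

lemma swapOp_comm_map (f : Module.End ℂ V) :
    swapOp * TensorProduct.map f f = TensorProduct.map f f * swapOp := by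
  apply TensorProduct.ext'
  intro x y
  simp [swapOp, Module.End.mul_apply]

lemma swapOp_mul_symm :
    (swapOp : Module.End ℂ (V ⊗[ℂ] V)) * (TensorProduct.comm ℂ V V).symm.toLinearMap = 1 := by
  apply TensorProduct.ext'
  intro x y
  simp [swapOp, Module.End.mul_apply]

lemma map_eq_one_key [FiniteDimensional ℂ V] (X Y : Module.End ℂ V)
    (h : TensorProduct.map X Y = (1 : Module.End ℂ (V ⊗[ℂ] V))) :
    ∃ q : ℂ, q ≠ 0 ∧ X = q • (1 : Module.End ℂ V) ∧ Y = q⁻¹ • (1 : Module.End ℂ V) := by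
  cases subsingleton_or_nontrivial V with
  | inl hs =>
    exact ⟨1, one_ne_zero, Subsingleton.elim _ _, Subsingleton.elim _ _⟩
  | inr hn =>
    let b := Module.finBasis ℂ V
    have hb : Nonempty (Fin (Module.finrank ℂ V)) := by
      have : 0 < Module.finrank ℂ V := Module.finrank_pos
      exact ⟨⟨0, this⟩⟩
    obtain ⟨i0⟩ := hb
    set A := LinearMap.toMatrix b b X with hA
    set B := LinearMap.toMatrix b b Y with hB
    have hmat : A.kroneckerMap (· * ·) B = 1 := by
      have := congrArg (LinearMap.toMatrix (b.tensorProduct b) (b.tensorProduct b)) h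
      rwa [TensorProduct.toMatrix_map, LinearMap.toMatrix_one] at this
    have hE : ∀ i j k l, A i k * B j l =
        (1 : Matrix (Fin (Module.finrank ℂ V) × Fin (Module.finrank ℂ V))
          (Fin (Module.finrank ℂ V) × Fin (Module.finrank ℂ V)) ℂ) (i, j) (k, l) := by
      intro i j k l
      have := congrFun (congrFun hmat (i, j)) (k, l)
      simpa [Matrix.kroneckerMap_apply] using this
    set q := A i0 i0 with hq
    have hqB : q * B i0 i0 = 1 := by
      have := hE i0 i0 i0 i0
      simpa [Matrix.one_apply] using this
    have hq0 : q ≠ 0 := left_ne_zero_of_mul_eq_one hqB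
    have hB0 : B i0 i0 ≠ 0 := right_ne_zero_of_mul_eq_one hqB
    have hAmat : A = q • (1 : Matrix _ _ ℂ) := by
      ext i k
      by_cases hik : i = k
      · subst hik
        have h1 : A i i * B i0 i0 = 1 := by
          have := hE i i0 i i0
          simpa [Matrix.one_apply] using this
        have : A i i = q := by
          have := h1.trans hqB.symm
          exact mul_right_cancel₀ hB0 this
        simpa [Matrix.one_apply] using this
      · have h0 : A i k * B i0 i0 = 0 := by
          have := hE i i0 k i0
          simpa [Matrix.one_apply, hik] using this
        have : A i k = 0 := by
          rcases mul_eq_zero.mp h0 with h | h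
          · exact h
          · exact absurd h hB0
        simpa [Matrix.one_apply, hik] using this
    have hBmat : B = q⁻¹ • (1 : Matrix _ _ ℂ) := by
      ext j l
      by_cases hjl : j = l
      · subst hjl
        have h1 : q * B j j = 1 := by
          have := hE i0 j i0 j
          simpa [Matrix.one_apply, ← hq] using this
        have : B j j = q⁻¹ := by
          field_simp
          linear_combination h1
        simpa [Matrix.one_apply] using this
      · have h0 : q * B j l = 0 := by
          have := hE i0 j i0 l
          simpa [Matrix.one_apply, hjl, ← hq] using this
        have : B j l = 0 := by
          rcases mul_eq_zero.mp h0 with h | h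
          · exact absurd h hq0
          · exact h
        simpa [Matrix.one_apply, hjl] using this
    refine ⟨q, hq0, ?_, ?_⟩
    · apply (LinearMap.toMatrix b b).injective
      rw [← hA, hAmat, map_smul, LinearMap.toMatrix_one]
    · apply (LinearMap.toMatrix b b).injective
      rw [← hB, hBmat, map_smul, LinearMap.toMatrix_one]

theorem stmt5 [FiniteDimensional ℂ V] (F G μ : (Module.End ℂ V)ˣ)
    (hcomm : (TensorProduct.map (F : Module.End ℂ V) (G : Module.End ℂ V) * swapOp) *
        TensorProduct.map (μ : Module.End ℂ V) (μ : Module.End ℂ V) =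
      TensorProduct.map (μ : Module.End ℂ V) (μ : Module.End ℂ V) *
        (TensorProduct.map (F : Module.End ℂ V) (G : Module.End ℂ V) * swapOp)) :
    ∃ q : ℂ, q ≠ 0 ∧
      (F : Module.End ℂ V) * μ = q • ((μ : Module.End ℂ V) * F) ∧
      (G : Module.End ℂ V) * μ = q⁻¹ • ((μ : Module.End ℂ V) * G) := by
  set f := (F : Module.End ℂ V) with hf
  set g := (G : Module.End ℂ V) with hg
  set m := (μ : Module.End ℂ V) with hm
  have map_mul' : ∀ (a b c d : Module.End ℂ V),
      TensorProduct.map a c * TensorProduct.map b d = TensorProduct.map (a * b) (c * d) := by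
    intro a b c d
    apply TensorProduct.ext'
    intro x y
    simp [Module.End.mul_apply]
  have h1 : TensorProduct.map (f * m) (g * m) * swapOp =
      TensorProduct.map (m * f) (m * g) * swapOp := by
    calc TensorProduct.map (f * m) (g * m) * swapOp
        = TensorProduct.map f g * (TensorProduct.map m m * swapOp) := by
          rw [← map_mul', mul_assoc]
      _ = TensorProduct.map f g * (swapOp * TensorProduct.map m m) := by
          rw [swapOp_comm_map]
      _ = (TensorProduct.map f g * swapOp) * TensorProduct.map m m := by rw [mul_assoc]
      _ = TensorProduct.map m m * (TensorProduct.map f g * swapOp) := hcomm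
      _ = TensorProduct.map (m * f) (m * g) * swapOp := by
          rw [← mul_assoc, map_mul']
  have h2 : TensorProduct.map (f * m) (g * m) = TensorProduct.map (m * f) (m * g) := by
    have := congrArg (· * (TensorProduct.comm ℂ V V).symm.toLinearMap) h1
    rw [mul_assoc, mul_assoc, swapOp_mul_symm] at this
    simpa [mul_assoc, swapOp_mul_symm] using this
  have e1 : (((μ * F)⁻¹ : (Module.End ℂ V)ˣ) : Module.End ℂ V) * (m * f) = 1 := by
    rw [hm, hf, ← Units.val_mul, ← Units.val_mul, inv_mul_cancel, Units.val_one]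
  have e2 : (((μ * G)⁻¹ : (Module.End ℂ V)ˣ) : Module.End ℂ V) * (m * g) = 1 := by
    rw [hm, hg, ← Units.val_mul, ← Units.val_mul, inv_mul_cancel, Units.val_one]
  have h3 : TensorProduct.map
      ((((μ * F)⁻¹ : (Module.End ℂ V)ˣ) : Module.End ℂ V) * (f * m))
      ((((μ * G)⁻¹ : (Module.End ℂ V)ˣ) : Module.End ℂ V) * (g * m)) =
      (1 : Module.End ℂ (V ⊗[ℂ] V)) := by
    rw [← map_mul', h2, map_mul', e1, e2]
    apply TensorProduct.ext'
    intro x y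
    simp
  obtain ⟨q, hq0, hX, hY⟩ := map_eq_one_key _ _ h3
  refine ⟨q, hq0, ?_, ?_⟩
  · have := congrArg (fun z => (((μ * F) : (Module.End ℂ V)ˣ) : Module.End ℂ V) * z) hX
    rw [← mul_assoc, ← Units.val_mul, mul_inv_cancel, Units.val_one, one_mul] at this
    rw [this, mul_smul_comm, mul_one, Units.val_mul, ← hm, ← hf]
  · have := congrArg (fun z => (((μ * G) : (Module.End ℂ V)ˣ) : Module.End ℂ V) * z) hY
    rw [← mul_assoc, ← Units.val_mul, mul_inv_cancel, Units.val_one, one_mul] at this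
    rw [this, mul_smul_comm, mul_one, Units.val_mul, ← hm, ← hg]
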